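/- Let X be an integer-valued random variable whose distribution is symmetric (X and −X have the same law) and log-concave over the integers, i.e., P(X = k)² ≥ P(X = k−1)·P(X = k+1) for all k ∈ ℤ, and with P(X=k) > 0 for all k. If the variance of X tends to infinity along a sequence of such random variables X_n, then for every fixed N, P(|X_n| ≤ N) → 0 as n → ∞. -/

import Mathlib

open Filter
open scoped ENNReal NNReal

section aux
variable {p : ℤ → ℝ}

lemma aux_lc_nat (hlc : ∀ k, p (k - 1) * p (k + 1) ≤ (p k) ^ 2) (k : ℕ) :
    p (k : ℤ) * p ((k : ℤ) + 2) ≤ p ((k : ℤ) + 1) ^ 2 := by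
  have h := hlc ((k : ℤ) + 1)
  have e1 : (k : ℤ) + 1 - 1 = (k : ℤ) := by ring
  have e2 : (k : ℤ) + 1 + 1 = (k : ℤ) + 2 := by ring
  rwa [e1, e2] at h

lemma aux_ratio (hpos : ∀ k, 0 < p k) (hlc : ∀ k, p (k - 1) * p (k + 1) ≤ (p k) ^ 2)
    (b c : ℕ) (hbc : b ≤ c) :
    p ((c : ℤ) + 1) * p (b : ℤ) ≤ p (c : ℤ) * p ((b : ℤ) + 1) := by
  induction c, hbc using Nat.le_induction with
  | base => exact (mul_comm _ _).le
  | succ c hbc ih =>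
      have h2 := aux_lc_nat hlc c
      have h3 : p ((c : ℤ) + 2) * p (b : ℤ) * p (c : ℤ)
          ≤ (p ((c : ℤ) + 1) * p ((b : ℤ) + 1)) * p (c : ℤ) := by
        nlinarith [mul_le_mul_of_nonneg_right h2 (hpos (b : ℤ)).le,
          mul_le_mul_of_nonneg_left ih (hpos ((c : ℤ) + 1)).le]
      have h4 := le_of_mul_le_mul_right h3 (hpos (c : ℤ))
      push_cast
      have e1 : (c : ℤ) + 1 + 1 = (c : ℤ) + 2 := by ring
      rw [e1]
      exact h4

lemma aux_one_le_zero (hpos : ∀ k, 0 < p k)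
    (hlc : ∀ k, p (k - 1) * p (k + 1) ≤ (p k) ^ 2) (hsymm : ∀ k, p (-k) = p k) :
    p 1 ≤ p 0 := by
  have h := hlc 0
  have e : (0 : ℤ) - 1 = -1 := by ring
  rw [e, hsymm 1] at h
  norm_num at h
  nlinarith [hpos 0, hpos 1]

lemma aux_anti (hpos : ∀ k, 0 < p k) (hlc : ∀ k, p (k - 1) * p (k + 1) ≤ (p k) ^ 2)
    (hsymm : ∀ k, p (-k) = p k) : ∀ a b : ℕ, a ≤ b → p (b : ℤ) ≤ p (a : ℤ) := by
  have hstep : ∀ c : ℕ, p ((c : ℤ) + 1) ≤ p (c : ℤ) := by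
    intro c
    have h := aux_ratio hpos hlc 0 c (Nat.zero_le c)
    norm_num at h
    have h1 := aux_one_le_zero hpos hlc hsymm
    have : p ((c : ℤ) + 1) * p 0 ≤ p (c : ℤ) * p 0 :=
      h.trans (mul_le_mul_of_nonneg_left h1 (hpos (c : ℤ)).le)
    exact le_of_mul_le_mul_right this (hpos 0)
  intro a b hab
  have : Antitone (fun c : ℕ => p (c : ℤ)) := by
    apply antitone_nat_of_succ_le
    intro c
    have := hstep c
    push_cast
    exact this
  exact this hab

lemma aux_submult (hpos : ∀ k, 0 < p k) (hlc : ∀ k, p (k - 1) * p (k + 1) ≤ (p k) ^ 2)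
    (a b : ℕ) : p ((a : ℤ) + (b : ℤ)) * p 0 ≤ p (a : ℤ) * p (b : ℤ) := by
  induction b with
  | zero => norm_num
  | succ b ih =>
      have hR := aux_ratio hpos hlc b (a + b) (Nat.le_add_left b a)
      push_cast at hR ⊢
      have h3 : (p ((a : ℤ) + (b : ℤ) + 1) * p 0) * p (b : ℤ)
          ≤ (p (a : ℤ) * p ((b : ℤ) + 1)) * p (b : ℤ) := by
        nlinarith [mul_le_mul_of_nonneg_right hR (hpos 0).le,
          mul_le_mul_of_nonneg_right ih (hpos ((b : ℤ) + 1)).le]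
      have h4 := le_of_mul_le_mul_right h3 (hpos (b : ℤ))
      have e : (a : ℤ) + ((b : ℤ) + 1) = (a : ℤ) + (b : ℤ) + 1 := by ring
      rw [e]
      exact h4

lemma aux_natAbs (hsymm : ∀ k, p (-k) = p k) (k : ℤ) : p k = p (k.natAbs : ℤ) := by
  rcases Int.natAbs_eq k with h | h
  · rw [← h]
  · conv_lhs => rw [h]
    rw [hsymm]

lemma aux_le_zero (hpos : ∀ k, 0 < p k) (hlc : ∀ k, p (k - 1) * p (k + 1) ≤ (p k) ^ 2)
    (hsymm : ∀ k, p (-k) = p k) (k : ℤ) : p k ≤ p 0 := by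
  rw [aux_natAbs hsymm k]
  have := aux_anti hpos hlc hsymm 0 k.natAbs (Nat.zero_le _)
  simpa using this

lemma aux_card_bound (hpos : ∀ k, 0 < p k) (hlc : ∀ k, p (k - 1) * p (k + 1) ≤ (p k) ^ 2)
    (hsymm : ∀ k, p (-k) = p k) (hsum : HasSum p 1) (m : ℕ) :
    (2 * (m : ℝ) + 1) * p (m : ℤ) ≤ 1 := by
  have hsub : ∑ k ∈ Finset.Icc (-(m : ℤ)) (m : ℤ), p k ≤ 1 :=
    sum_le_hasSum _ (fun i _ => (hpos i).le) hsum
  have hcard : (Finset.Icc (-(m : ℤ)) (m : ℤ)).card = 2 * m + 1 := by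
    rw [Int.card_Icc]
    omega
  have hterm : ∀ k ∈ Finset.Icc (-(m : ℤ)) (m : ℤ), p (m : ℤ) ≤ p k := by
    intro k hk
    simp only [Finset.mem_Icc] at hk
    rw [aux_natAbs hsymm k]
    exact aux_anti hpos hlc hsymm k.natAbs m (by omega)
  have := Finset.card_nsmul_le_sum _ _ _ hterm
  rw [hcard, nsmul_eq_mul] at this
  push_cast at this
  calc (2 * (m : ℝ) + 1) * p (m : ℤ) ≤ ∑ k ∈ Finset.Icc (-(m : ℤ)) (m : ℤ), p k := by
        convert this using 2
    _ ≤ 1 := hsub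

lemma aux_sq_le : ∀ j : ℕ, ((j : ℝ) + 1) ^ 2 ≤ 4 * 2 ^ j
  | 0 => by norm_num
  | 1 => by norm_num
  | 2 => by norm_num
  | (j + 3) => by
      have ih := aux_sq_le (j + 2)
      push_cast at ih ⊢
      rw [show (2:ℝ)^(j+3) = 2^(j+2)*2 from pow_succ 2 (j+2)]
      nlinarith [ih, sq_nonneg ((j : ℝ)), Nat.cast_nonneg (α := ℝ) j]

lemma aux_var_bound (hpos : ∀ k, 0 < p k) (hlc : ∀ k, p (k - 1) * p (k + 1) ≤ (p k) ^ 2)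
    (hsymm : ∀ k, p (-k) = p k) (hsum : HasSum p 1) :
    ∑' k : ℤ, ENNReal.ofReal ((k : ℝ) ^ 2 * p k) ≤ ENNReal.ofReal (3456 / (p 0) ^ 2) := by
  have hp0 : 0 < p 0 := hpos 0
  have hp0le1 : p 0 ≤ 1 := by
    have h := aux_card_bound hpos hlc hsymm hsum 0
    norm_num at h
    exact h
  set m' : ℕ := ⌈(p 0)⁻¹⌉₊ with hm'def
  have hm'ge : (p 0)⁻¹ ≤ (m' : ℝ) := Nat.le_ceil _
  have hm'pos : 0 < m' := by
    have : (0:ℝ) < (p 0)⁻¹ := by positivity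
    exact_mod_cast Nat.ceil_pos.mpr this
  have hm'le : (m' : ℝ) ≤ 2 / p 0 := by
    have h1 : (m' : ℝ) < (p 0)⁻¹ + 1 := Nat.ceil_lt_add_one (by positivity)
    have h2 : (1:ℝ) ≤ (p 0)⁻¹ := by
      nlinarith [mul_inv_cancel₀ hp0.ne',
        mul_nonneg (inv_nonneg.mpr hp0.le) (sub_nonneg.mpr hp0le1)]
    rw [div_eq_mul_inv]
    linarith
  -- p m' ≤ p0 / 2
  have hhalf : p (m' : ℤ) ≤ p 0 / 2 := by
    have h1 := aux_card_bound hpos hlc hsymm hsum m'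
    have h2 : (1:ℝ) ≤ p 0 * m' := by
      have := mul_le_mul_of_nonneg_left hm'ge hp0.le
      rwa [mul_inv_cancel₀ hp0.ne'] at this
    nlinarith [hpos (m' : ℤ), hp0]
  set m : ℕ := 3 * m' with hmdef
  have hmne : m ≠ 0 := by omega
  haveI : NeZero m := ⟨hmne⟩
  have hmle : (m : ℝ) ≤ 6 / p 0 := by
    push_cast [hmdef]
    rw [show (6:ℝ)/p 0 = 3 * (2 / p 0) by ring]
    linarith
  -- p m ≤ p0 / 8
  have heighth : p (m : ℤ) ≤ p 0 / 8 := by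
    have s1 := aux_submult hpos hlc m' m'
    have s2 := aux_submult hpos hlc (2 * m') m'
    have e1 : ((m' : ℤ) + (m' : ℤ)) = (((2 * m' : ℕ)) : ℤ) := by push_cast; ring
    have e2 : (((2 * m' : ℕ)) : ℤ) + (m' : ℤ) = ((m : ℕ) : ℤ) := by push_cast [hmdef]; ring
    rw [e1] at s1
    rw [e2] at s2
    set A := p (m' : ℤ) with hA
    set B := p (((2 * m' : ℕ)) : ℤ) with hB
    set C := p ((m : ℕ) : ℤ) with hC
    have hApos := hpos (m' : ℤ)
    have hBpos := hpos (((2 * m' : ℕ)) : ℤ)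
    have hCpos := hpos ((m : ℕ) : ℤ)
    have key : C * (p 0) ^ 2 ≤ (p 0 / 8) * (p 0) ^ 2 := by
      have c1 : C * (p 0) ^ 2 ≤ (B * A) * p 0 := by nlinarith [s2]
      have c2 : (B * A) * p 0 ≤ (A * A) * A := by nlinarith [s1, hApos]
      have c3 : (A * A) * A ≤ (p 0 / 2) * (p 0 / 2) * (p 0 / 2) :=
        mul_le_mul (mul_le_mul hhalf hhalf hApos.le (by positivity)) hhalf hApos.le
          (by positivity)
      nlinarith [c1, c2, c3]
    exact le_of_mul_le_mul_right key (by positivity)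
  -- geometric decay
  have hdecay : ∀ j : ℕ, p ((j * m : ℕ) : ℤ) ≤ p 0 * (1/8 : ℝ) ^ j := by
    intro j
    induction j with
    | zero => simp
    | succ j ih =>
        have s := aux_submult hpos hlc (j * m) m
        have e : ((((j+1) * m : ℕ)) : ℤ) = ((j * m : ℕ) : ℤ) + ((m : ℕ) : ℤ) := by
          push_cast; ring
        have h5 : p ((((j+1) * m : ℕ)) : ℤ) * p 0 ≤ (p 0 * (1/8 : ℝ) ^ (j+1)) * p 0 := by
          rw [e]
          calc p (((j * m : ℕ) : ℤ) + ((m : ℕ) : ℤ)) * p 0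
              ≤ p ((j * m : ℕ) : ℤ) * p ((m : ℕ) : ℤ) := s
            _ ≤ (p 0 * (1/8 : ℝ) ^ j) * (p 0 / 8) := by
                apply mul_le_mul ih heighth (hpos _).le (by positivity)
            _ = (p 0 * (1/8 : ℝ) ^ (j+1)) * p 0 := by ring
        exact le_of_mul_le_mul_right h5 hp0
  have hk : ∀ k : ℕ, p (k : ℤ) ≤ p 0 * (1/8 : ℝ) ^ (k / m) := by
    intro k
    calc p (k : ℤ) ≤ p (((k / m * m : ℕ)) : ℤ) :=
          aux_anti hpos hlc hsymm _ _ (Nat.div_mul_le_self k m)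
      _ ≤ p 0 * (1/8 : ℝ) ^ (k / m) := hdecay (k / m)
  -- sum over ℕ
  have hS : (∑' k : ℕ, ENNReal.ofReal ((k : ℝ) ^ 2 * p (k : ℤ)))
      ≤ ENNReal.ofReal (1728 / (p 0) ^ 2) := by
    have e1 : (∑' k : ℕ, ENNReal.ofReal ((k : ℝ) ^ 2 * p (k : ℤ)))
        = ∑' x : ℕ × Fin m, ENNReal.ofReal (((x.1 * m + x.2 : ℕ) : ℝ) ^ 2
            * p ((x.1 * m + x.2 : ℕ) : ℤ)) := by
      rw [← Equiv.tsum_eq (Nat.divModEquiv m).symm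
        (fun k : ℕ => ENNReal.ofReal ((k : ℝ) ^ 2 * p (k : ℤ)))]
      refine tsum_congr fun x => ?_
      simp [Nat.divModEquiv]
    have e2 : (∑' x : ℕ × Fin m, ENNReal.ofReal (((x.1 * m + x.2 : ℕ) : ℝ) ^ 2
            * p ((x.1 * m + x.2 : ℕ) : ℤ)))
        = ∑' (j : ℕ), ∑' (i : Fin m), ENNReal.ofReal (((j * m + i : ℕ) : ℝ) ^ 2
            * p ((j * m + i : ℕ) : ℤ)) :=
      ENNReal.tsum_prod (f := fun (j : ℕ) (i : Fin m) =>
        ENNReal.ofReal (((j * m + i : ℕ) : ℝ) ^ 2 * p ((j * m + i : ℕ) : ℤ)))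
    rw [e1, e2]
    have hbound : ∀ (j : ℕ) (i : Fin m),
        ENNReal.ofReal (((j * m + i : ℕ) : ℝ) ^ 2 * p ((j * m + i : ℕ) : ℤ))
        ≤ ENNReal.ofReal ((4 * (m:ℝ)^2 * p 0) * (1/2 : ℝ) ^ j) := by
      intro j i
      apply ENNReal.ofReal_le_ofReal
      have hb1 : ((j * m + i : ℕ) : ℝ) ^ 2 ≤ ((m : ℝ) * ((j:ℝ)+1)) ^ 2 := by
        have hi : (i : ℕ) < m := i.2
        have : ((j * m + i : ℕ) : ℝ) ≤ (m : ℝ) * ((j:ℝ)+1) := by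
          push_cast
          have : ((i:ℕ):ℝ) ≤ (m:ℝ) := by exact_mod_cast hi.le
          nlinarith [this]
        have h0 : (0:ℝ) ≤ ((j * m + i : ℕ) : ℝ) := by positivity
        nlinarith [this, h0]
      have hb2 : p ((j * m + i : ℕ) : ℤ) ≤ p 0 * (1/8 : ℝ) ^ j := by
        calc p ((j * m + i : ℕ) : ℤ) ≤ p ((j * m : ℕ) : ℤ) :=
              aux_anti hpos hlc hsymm _ _ (Nat.le_add_right _ _)
          _ ≤ p 0 * (1/8 : ℝ) ^ j := hdecay j
      have hsq := aux_sq_le j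
      calc ((j * m + i : ℕ) : ℝ) ^ 2 * p ((j * m + i : ℕ) : ℤ)
          ≤ ((m : ℝ) * ((j:ℝ)+1)) ^ 2 * (p 0 * (1/8 : ℝ) ^ j) := by
            apply mul_le_mul hb1 hb2 (hpos _).le (by positivity)
        _ = (m:ℝ)^2 * p 0 * (((j:ℝ)+1)^2 * (1/8 : ℝ) ^ j) := by ring
        _ ≤ (m:ℝ)^2 * p 0 * ((4 * 2 ^ j) * (1/8 : ℝ) ^ j) := by
            apply mul_le_mul_of_nonneg_left _ (by positivity)
            apply mul_le_mul_of_nonneg_right hsq (by positivity)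
        _ = (4 * (m:ℝ)^2 * p 0) * (2/8 : ℝ) ^ j := by
            rw [show (2/8 : ℝ) = 2 * (1/8) by norm_num, mul_pow]
            ring
        _ ≤ (4 * (m:ℝ)^2 * p 0) * (1/2 : ℝ) ^ j := by
            apply mul_le_mul_of_nonneg_left _ (by positivity)
            apply pow_le_pow_left₀ (by norm_num) (by norm_num)
    calc ∑' (j : ℕ) (i : Fin m), ENNReal.ofReal (((j * m + i : ℕ) : ℝ) ^ 2
            * p ((j * m + i : ℕ) : ℤ))
        ≤ ∑' (j : ℕ), ∑' (i : Fin m),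
            ENNReal.ofReal ((4 * (m:ℝ)^2 * p 0) * (1/2 : ℝ) ^ j) :=
          ENNReal.tsum_le_tsum fun j => ENNReal.tsum_le_tsum fun i => hbound j i
      _ = ∑' (j : ℕ), ((m : ℝ≥0∞) * ENNReal.ofReal ((4 * (m:ℝ)^2 * p 0) * (1/2 : ℝ) ^ j)) := by
          refine tsum_congr fun j => ?_
          rw [tsum_fintype]
          simp [Finset.sum_const, nsmul_eq_mul]
      _ = (m : ℝ≥0∞) * ∑' (j : ℕ), ENNReal.ofReal ((4 * (m:ℝ)^2 * p 0) * (1/2 : ℝ) ^ j) :=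
          ENNReal.tsum_mul_left
      _ ≤ ENNReal.ofReal (1728 / (p 0) ^ 2) := by
          have hofhalf : ENNReal.ofReal (1/2 : ℝ) = 2⁻¹ := by
            rw [one_div, ENNReal.ofReal_inv_of_pos (by norm_num)]
            norm_num
          have eterm : ∀ j : ℕ, ENNReal.ofReal ((4 * (m:ℝ)^2 * p 0) * (1/2 : ℝ) ^ j)
              = ENNReal.ofReal (4 * (m:ℝ)^2 * p 0) * (2⁻¹ : ℝ≥0∞) ^ j := by
            intro j
            rw [ENNReal.ofReal_mul (by positivity), ENNReal.ofReal_pow (by norm_num), hofhalf]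
          calc (m : ℝ≥0∞) * ∑' (j : ℕ), ENNReal.ofReal ((4 * (m:ℝ)^2 * p 0) * (1/2 : ℝ) ^ j)
              = (m : ℝ≥0∞) * (ENNReal.ofReal (4 * (m:ℝ)^2 * p 0)
                  * ∑' (j : ℕ), (2⁻¹ : ℝ≥0∞) ^ j) := by
                simp_rw [eterm, ENNReal.tsum_mul_left]
            _ = (m : ℝ≥0∞) * (ENNReal.ofReal (4 * (m:ℝ)^2 * p 0) * 2) := by
                rw [ENNReal.tsum_geometric, ENNReal.one_sub_inv_two, inv_inv]
            _ = ENNReal.ofReal ((m : ℝ) * ((4 * (m:ℝ)^2 * p 0) * 2)) := by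
                conv_rhs => rw [ENNReal.ofReal_mul (by positivity),
                  ENNReal.ofReal_mul (by positivity), ENNReal.ofReal_natCast,
                  ENNReal.ofReal_ofNat]
            _ ≤ ENNReal.ofReal (1728 / (p 0) ^ 2) := by
                apply ENNReal.ofReal_le_ofReal
                have hm3 : (m:ℝ)^3 ≤ (6 / p 0)^3 :=
                  pow_le_pow_left₀ (by positivity) hmle 3
                have heq : 8 * (6 / p 0)^3 * p 0 = 1728 / (p 0)^2 := by
                  field_simp
                  ring
                nlinarith [hm3, hp0]
  -- split the ℤ-sum
  have hsplit : (∑' k : ℤ, ENNReal.ofReal ((k : ℝ) ^ 2 * p k))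
      = (∑' n : ℕ, ENNReal.ofReal (((n : ℤ) : ℝ) ^ 2 * p (n : ℤ)))
        + ∑' n : ℕ, ENNReal.ofReal (((-((n : ℤ) + 1) : ℤ) : ℝ) ^ 2 * p (-((n : ℤ) + 1))) :=
    tsum_of_nat_of_neg_add_one ENNReal.summable ENNReal.summable
  have hneg : ∀ n : ℕ, ENNReal.ofReal (((-((n : ℤ) + 1) : ℤ) : ℝ) ^ 2 * p (-((n : ℤ) + 1)))
      = ENNReal.ofReal ((((n+1 : ℕ)) : ℝ) ^ 2 * p ((n+1 : ℕ) : ℤ)) := by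
    intro n
    have e : (-((n : ℤ) + 1)) = -(((n+1 : ℕ)) : ℤ) := by push_cast; ring
    rw [e, hsymm]
    congr 1
    push_cast
    try ring
  have hposnat : (∑' n : ℕ, ENNReal.ofReal (((n : ℤ) : ℝ) ^ 2 * p (n : ℤ)))
      = ∑' n : ℕ, ENNReal.ofReal ((n : ℝ) ^ 2 * p (n : ℤ)) := by
    refine tsum_congr fun n => ?_
    norm_cast
  have hnegsum : (∑' n : ℕ, ENNReal.ofReal (((-((n : ℤ) + 1) : ℤ) : ℝ) ^ 2 * p (-((n : ℤ) + 1))))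
      ≤ ∑' n : ℕ, ENNReal.ofReal ((n : ℝ) ^ 2 * p (n : ℤ)) := by
    calc (∑' n : ℕ, ENNReal.ofReal (((-((n : ℤ) + 1) : ℤ) : ℝ) ^ 2 * p (-((n : ℤ) + 1))))
        = ∑' n : ℕ, ENNReal.ofReal ((((n+1 : ℕ)) : ℝ) ^ 2 * p ((n+1 : ℕ) : ℤ)) :=
          tsum_congr hneg
      _ ≤ ∑' n : ℕ, ENNReal.ofReal ((n : ℝ) ^ 2 * p (n : ℤ)) := by
          apply Summable.tsum_le_tsum_of_inj (fun n : ℕ => n + 1)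
            (fun a b h => by simpa using h) (fun c _ => zero_le) (fun b => le_rfl)
            ENNReal.summable ENNReal.summable
  rw [hsplit, hposnat]
  calc (∑' n : ℕ, ENNReal.ofReal ((n : ℝ) ^ 2 * p (n : ℤ)))
        + ∑' n : ℕ, ENNReal.ofReal (((-((n : ℤ) + 1) : ℤ) : ℝ) ^ 2 * p (-((n : ℤ) + 1)))
      ≤ ENNReal.ofReal (1728 / (p 0) ^ 2) + ENNReal.ofReal (1728 / (p 0) ^ 2) :=
        add_le_add hS (hnegsum.trans hS)
    _ = ENNReal.ofReal (3456 / (p 0) ^ 2) := by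
        rw [← ENNReal.ofReal_add (by positivity) (by positivity)]
        congr 1
        ring

end aux

/-- If `p n` is a sequence of symmetric, log-concave, everywhere positive
probability distributions on `ℤ` whose variances tend to infinity, then for
every fixed `N`, the probability `P(|X_n| ≤ N)` tends to `0`. -/
theorem logConcave_var_blowup (p : ℕ → ℤ → ℝ)
    (hpos : ∀ n k, 0 < p n k)
    (hsum : ∀ n, HasSum (p n) 1)
    (hsymm : ∀ n k, p n (-k) = p n k)
    (hlogconcave : ∀ n k, p n (k - 1) * p n (k + 1) ≤ (p n k) ^ 2)
    (hvar : Tendsto (fun n => ∑' k : ℤ, ENNReal.ofReal ((k : ℝ) ^ 2 * p n k))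
      atTop (nhds ⊤)) :
    ∀ N : ℕ, Tendsto (fun n => ∑ k ∈ Finset.Icc (-(N : ℤ)) (N : ℤ), p n k)
      atTop (nhds 0) := by
  intro N
  have hvb : ∀ n, (∑' k : ℤ, ENNReal.ofReal ((k : ℝ) ^ 2 * p n k))
      ≤ ENNReal.ofReal (3456 / (p n 0) ^ 2) :=
    fun n => aux_var_bound (hpos n) (hlogconcave n) (hsymm n) (hsum n)
  have hzero : Tendsto (fun n => p n 0) atTop (nhds 0) := by
    rw [Metric.tendsto_atTop]
    intro ε hε
    have hlt : (ENNReal.ofReal (3456 / ε ^ 2)) < ⊤ := ENNReal.ofReal_lt_top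
    have hev := hvar.eventually (lt_mem_nhds hlt)
    rw [eventually_atTop] at hev
    obtain ⟨N0, hN0⟩ := hev
    refine ⟨N0, fun n hn => ?_⟩
    have h1 := hN0 n hn
    have h2 : p n 0 < ε := by
      by_contra hcon
      push_neg at hcon
      have hsq : ε ^ 2 ≤ (p n 0) ^ 2 := by nlinarith [hε, hcon]
      have hdiv : (3456 / (p n 0) ^ 2 : ℝ) ≤ 3456 / ε ^ 2 :=
        (div_le_div_iff_of_pos_left (by norm_num) (pow_pos (hpos n 0) 2) (pow_pos hε 2)).mpr hsq
      exact absurd (lt_of_lt_of_le h1 ((hvb n).trans (ENNReal.ofReal_le_ofReal hdiv)))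
        (lt_irrefl _)
    rw [Real.dist_eq, sub_zero, abs_of_pos (hpos n 0)]
    exact h2
  have hb : ∀ n, ∑ k ∈ Finset.Icc (-(N : ℤ)) (N : ℤ), p n k
      ≤ ((2 * N + 1 : ℕ) : ℝ) * p n 0 := by
    intro n
    have hcard : (Finset.Icc (-(N : ℤ)) (N : ℤ)).card = 2 * N + 1 := by
      rw [Int.card_Icc]; omega
    have := Finset.sum_le_card_nsmul (Finset.Icc (-(N : ℤ)) (N : ℤ)) (p n) (p n 0)
      (fun k _ => aux_le_zero (hpos n) (hlogconcave n) (hsymm n) k)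
    rwa [hcard, nsmul_eq_mul] at this
  have hnn : ∀ n, 0 ≤ ∑ k ∈ Finset.Icc (-(N : ℤ)) (N : ℤ), p n k :=
    fun n => Finset.sum_nonneg fun k _ => (hpos n k).le
  refine squeeze_zero hnn hb ?_
  have := hzero.const_mul ((2 * N + 1 : ℕ) : ℝ)
  simpa using this
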